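/- Let n ≥ 6 be even and let r, r' : Fin n → ZMod n be two injective functions with r(j) ≠ r'(j) for all j, such that dist(r(j+1), r(j)) ≥ n/2 − 1 and dist(r'(j+1), r'(j)) ≥ n/2 − 1 for all 0 ≤ j ≤ n−2, and dist(r(j), r'(j)) ≥ n/2 − 1 for all j. Define integers ε_j = (r(j+1) − r(j)).val − n/2 and ε'_j = (r'(j+1) − r'(j)).val − n/2 for 0 ≤ j ≤ n−2, and h = (r(0) − r(n−1)).val − n/2, h' = (r'(0) − r'(n−1)).val − n/2. Then for all 0 ≤ j₁ ≤ j₂ ≤ n−2 one has |∑_{j=j₁}^{j₂} (ε'_j − ε_j)| ≤ 2; moreover |h − h'| ≤ 2, or |h| = n/2 − 1 and h' = −h. -/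
import Mathlib


/-- Distance between two symbols of `ZMod n`: the minimum of the two cyclic differences. -/
def zdist {n : ℕ} (a b : ZMod n) : ℕ := min (a - b).val (b - a).val

/-- An order-`n` Latin square: every row and every column is injective. -/
def IsLatin (n : ℕ) (L : Fin n → Fin n → ZMod n) : Prop :=
  (∀ i, Function.Injective (L i)) ∧ ∀ j, Function.Injective fun i => L i j

/-- The inner distance of a square: the minimum of `zdist` over all pairs of
horizontally or vertically adjacent cells. -/
noncomputable def innerDist (n : ℕ) (L : Fin n → Fin n → ZMod n) : ℕ :=
  sInf { d : ℕ |
    (∃ i : Fin n, ∃ j : ℕ, ∃ hj : j + 1 < n,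
      d = zdist (L i ⟨j, Nat.lt_of_succ_lt hj⟩) (L i ⟨j + 1, hj⟩)) ∨
    (∃ j : Fin n, ∃ i : ℕ, ∃ hi : i + 1 < n,
      d = zdist (L ⟨i, Nat.lt_of_succ_lt hi⟩ j) (L ⟨i + 1, hi⟩ j)) }

/-- The signed extended difference `ε_j = (r (j+1) - r j).val - n/2` (as an integer). -/
def eps (n : ℕ) (r : Fin n → ZMod n) (j : Fin (n - 1)) : ℤ :=
  ((r ⟨(j : ℕ) + 1, by have := j.isLt; omega⟩ -
      r ⟨(j : ℕ), by have := j.isLt; omega⟩).val : ℤ) - ((n / 2 : ℕ) : ℤ)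

/-- The signed final difference `h = (r 0 - r (n-1)).val - n/2` (as an integer). -/
def hlast (n : ℕ) (r : Fin n → ZMod n) (hn : 0 < n) : ℤ :=
  ((r ⟨0, hn⟩ - r ⟨n - 1, by omega⟩).val : ℤ) - ((n / 2 : ℕ) : ℤ)

theorem stmt15 (n : ℕ) (hn : 6 ≤ n) (he : Even n)
    (r r' : Fin n → ZMod n)
    (hr : Function.Injective r) (hr' : Function.Injective r')
    (hne : ∀ j, r j ≠ r' j)
    (hrow : ∀ j : ℕ, ∀ hj : j + 1 < n,
      n / 2 - 1 ≤ zdist (r ⟨j + 1, hj⟩) (r ⟨j, Nat.lt_of_succ_lt hj⟩))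
    (hrow' : ∀ j : ℕ, ∀ hj : j + 1 < n,
      n / 2 - 1 ≤ zdist (r' ⟨j + 1, hj⟩) (r' ⟨j, Nat.lt_of_succ_lt hj⟩))
    (hcol : ∀ j : Fin n, n / 2 - 1 ≤ zdist (r j) (r' j)) :
    (∀ j₁ j₂ : Fin (n - 1), j₁ ≤ j₂ →
      |∑ j ∈ Finset.Icc j₁ j₂, (eps n r' j - eps n r j)| ≤ 2) ∧
    (|hlast n r (by omega) - hlast n r' (by omega)| ≤ 2 ∨
      (|hlast n r (by omega)| = ((n / 2 : ℕ) : ℤ) - 1 ∧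
        hlast n r' (by omega) = - hlast n r (by omega))) := by
  have hn0 : 0 < n := by omega
  haveI : NeZero n := ⟨by omega⟩
  have h2m : 2 * (n / 2) = n := by obtain ⟨k, hk⟩ := he; omega
  have hsum : ∀ a b : ZMod n, a ≠ b → (a - b).val + (b - a).val = n := by
    intro a b hab
    have h2 : a - b ≠ 0 := sub_ne_zero.mpr hab
    have h1 : b - a = -(a - b) := by ring
    rw [h1, ZMod.neg_val, if_neg h2]
    have h3 := ZMod.val_lt (a - b)
    have h4 : (a - b).val ≠ 0 := fun h => h2 ((ZMod.val_eq_zero _).mp h)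
    omega
  -- column bounds
  have hcval : ∀ j : Fin n, n / 2 - 1 ≤ (r' j - r j).val ∧ (r' j - r j).val ≤ n / 2 + 1 := by
    intro j
    have h1 := hcol j
    have h2 := hsum (r j) (r' j) (hne j)
    simp only [zdist, le_min_iff] at h1
    omega
  set c : ℕ → ℤ := fun k => ((r' ⟨k % n, Nat.mod_lt _ hn0⟩ - r ⟨k % n, Nat.mod_lt _ hn0⟩).val : ℤ)
    with hcdef
  have cval : ∀ (k : ℕ) (hk : k < n), c k = ((r' ⟨k, hk⟩ - r ⟨k, hk⟩).val : ℤ) := by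
    intro k hk
    have hfin : (⟨k % n, Nat.mod_lt _ hn0⟩ : Fin n) = ⟨k, hk⟩ := by
      simp [Fin.ext_iff, Nat.mod_eq_of_lt hk]
    simp only [hcdef, hfin]
  have cbound : ∀ (k : ℕ), k < n → ((n / 2 : ℕ) : ℤ) - 1 ≤ c k ∧ c k ≤ ((n / 2 : ℕ) : ℤ) + 1 := by
    intro k hk
    rw [cval k hk]
    have := hcval ⟨k, hk⟩
    omega
  -- row bounds
  have hrval : ∀ (j : ℕ) (hj : j + 1 < n),
      n / 2 - 1 ≤ (r ⟨j + 1, hj⟩ - r ⟨j, Nat.lt_of_succ_lt hj⟩).val ∧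
        (r ⟨j + 1, hj⟩ - r ⟨j, Nat.lt_of_succ_lt hj⟩).val ≤ n / 2 + 1 := by
    intro j hj
    have h1 := hrow j hj
    have hne2 : r ⟨j + 1, hj⟩ ≠ r ⟨j, Nat.lt_of_succ_lt hj⟩ := fun h => by
      have := hr h; simp [Fin.ext_iff] at this
    have h2 := hsum _ _ hne2
    simp only [zdist, le_min_iff] at h1
    omega
  have hrval' : ∀ (j : ℕ) (hj : j + 1 < n),
      n / 2 - 1 ≤ (r' ⟨j + 1, hj⟩ - r' ⟨j, Nat.lt_of_succ_lt hj⟩).val ∧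
        (r' ⟨j + 1, hj⟩ - r' ⟨j, Nat.lt_of_succ_lt hj⟩).val ≤ n / 2 + 1 := by
    intro j hj
    have h1 := hrow' j hj
    have hne2 : r' ⟨j + 1, hj⟩ ≠ r' ⟨j, Nat.lt_of_succ_lt hj⟩ := fun h => by
      have := hr' h; simp [Fin.ext_iff] at this
    have h2 := hsum _ _ hne2
    simp only [zdist, le_min_iff] at h1
    omega
  -- key step lemma
  have step : ∀ j : Fin (n - 1), eps n r' j - eps n r j = c ((j : ℕ) + 1) - c (j : ℕ) := by
    intro j
    have hj1 : (j : ℕ) + 1 < n := by have := j.isLt; omega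
    have hj0 : (j : ℕ) < n := by omega
    rw [cval _ hj1, cval _ hj0]
    simp only [eps]
    set A : ℤ := (((r' ⟨(j : ℕ) + 1, hj1⟩ - r ⟨(j : ℕ) + 1, hj1⟩).val : ℤ) -
        ((r' ⟨(j : ℕ), hj0⟩ - r ⟨(j : ℕ), hj0⟩).val : ℤ)) -
      (((r' ⟨(j : ℕ) + 1, hj1⟩ - r' ⟨(j : ℕ), hj0⟩).val : ℤ) -
        ((r ⟨(j : ℕ) + 1, hj1⟩ - r ⟨(j : ℕ), hj0⟩).val : ℤ)) with hA
    have hdvd : (n : ℤ) ∣ A := by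
      have hz : ((A : ℤ) : ZMod n) = 0 := by
        simp only [hA]
        push_cast
        simp only [ZMod.natCast_val, ZMod.cast_id]
        ring
      exact (ZMod.intCast_zmod_eq_zero_iff_dvd A n).mp hz
    have b1 := hcval ⟨(j : ℕ) + 1, hj1⟩
    have b2 := hcval ⟨(j : ℕ), hj0⟩
    have b3 := hrval (j : ℕ) hj1
    have b4 := hrval' (j : ℕ) hj1
    have hA0 : A = 0 := by
      refine Int.eq_zero_of_abs_lt_dvd hdvd ?_
      have : |A| ≤ 4 := by rw [abs_le]; constructor <;> omega
      omega
    omega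
  -- telescoping
  have tele : ∀ a b : ℕ, a ≤ b → ∑ k ∈ Finset.Icc a b, (c (k + 1) - c k) = c (b + 1) - c a := by
    intro a b hab
    induction b, hab using Nat.le_induction with
    | base => simp
    | succ b hab ih =>
      rw [Finset.sum_Icc_succ_top (by omega), ih]
      ring
  constructor
  · intro j₁ j₂ h12
    rw [Finset.sum_congr rfl (fun j _ => step j)]
    have hmap : ∑ j ∈ Finset.Icc j₁ j₂, (c ((j : ℕ) + 1) - c (j : ℕ)) =
        ∑ k ∈ Finset.Icc (j₁ : ℕ) (j₂ : ℕ), (c (k + 1) - c k) := by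
      rw [← Fin.map_valEmbedding_Icc, Finset.sum_map]
      rfl
    rw [hmap, tele _ _ h12]
    have hb1 := cbound ((j₂ : ℕ) + 1) (by have := j₂.isLt; omega)
    have hb2 := cbound (j₁ : ℕ) (by have := j₁.isLt; omega)
    rw [abs_le]
    constructor <;> omega
  · -- last column
    have hN : n - 1 < n := by omega
    have h0 : (0 : ℕ) < n := hn0
    have hne0 : r ⟨0, h0⟩ ≠ r ⟨n - 1, hN⟩ := fun h => by
      have := hr h; simp [Fin.ext_iff] at this; omega
    have hne0' : r' ⟨0, h0⟩ ≠ r' ⟨n - 1, hN⟩ := fun h => by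
      have := hr' h; simp [Fin.ext_iff] at this; omega
    have hv1 : (r ⟨0, h0⟩ - r ⟨n - 1, hN⟩).val ≠ 0 :=
      fun h => (sub_ne_zero.mpr hne0) ((ZMod.val_eq_zero _).mp h)
    have hv1' : (r' ⟨0, h0⟩ - r' ⟨n - 1, hN⟩).val ≠ 0 :=
      fun h => (sub_ne_zero.mpr hne0') ((ZMod.val_eq_zero _).mp h)
    have hv2 := ZMod.val_lt (r ⟨0, h0⟩ - r ⟨n - 1, hN⟩)
    have hv2' := ZMod.val_lt (r' ⟨0, h0⟩ - r' ⟨n - 1, hN⟩)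
    set H := hlast n r (by omega : 0 < n) with hHdef
    set H' := hlast n r' (by omega : 0 < n) with hHdef'
    have hH : H = ((r ⟨0, h0⟩ - r ⟨n - 1, hN⟩).val : ℤ) - ((n / 2 : ℕ) : ℤ) := rfl
    have hH' : H' = ((r' ⟨0, h0⟩ - r' ⟨n - 1, hN⟩).val : ℤ) - ((n / 2 : ℕ) : ℤ) := rfl
    set B : ℤ := (H - H') - (c (n - 1) - c 0) with hB
    have hdvd : (n : ℤ) ∣ B := by
      have hz : ((B : ℤ) : ZMod n) = 0 := by
        simp only [hB, hH, hH', cval (n - 1) hN, cval 0 h0]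
        push_cast
        simp only [ZMod.natCast_val, ZMod.cast_id]
        ring
      exact (ZMod.intCast_zmod_eq_zero_iff_dvd B n).mp hz
    obtain ⟨t, ht⟩ := hdvd
    have hb1 := cbound (n - 1) hN
    have hb2 := cbound 0 h0
    have hn6 : (6 : ℤ) ≤ (n : ℤ) := by exact_mod_cast hn
    have hm3 : (3 : ℤ) ≤ ((n / 2 : ℕ) : ℤ) := by
      have : 3 ≤ n / 2 := by omega
      exact_mod_cast this
    have hBn : B ≤ (n : ℤ) ∧ -(n : ℤ) ≤ B := by
      constructor <;> omega
    have ht1 : t ≤ 1 := by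
      by_contra hcon
      push_neg at hcon
      have h2t : (n : ℤ) * 2 ≤ (n : ℤ) * t :=
        mul_le_mul_of_nonneg_left (by omega) (by omega)
      linarith [hBn.1]
    have ht2 : -1 ≤ t := by
      by_contra hcon
      push_neg at hcon
      have h2t : (n : ℤ) * t ≤ (n : ℤ) * (-2) :=
        mul_le_mul_of_nonneg_left (by omega) (by omega)
      linarith [hBn.2]
    interval_cases t
    · -- t = -1 : B = -n
      right
      have hBe : B = -(n : ℤ) := by rw [ht]; ring
      have hval : H = 1 - ((n / 2 : ℕ) : ℤ) := by omega
      constructor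
      · rw [hval, abs_of_nonpos (by omega)]
        ring
      · omega
    · -- t = 0 : B = 0
      left
      have hBe : B = 0 := by rw [ht]; ring
      rw [abs_le]
      constructor <;> omega
    · -- t = 1 : B = n
      right
      have hBe : B = (n : ℤ) := by rw [ht]; ring
      have hval : H = ((n / 2 : ℕ) : ℤ) - 1 := by omega
      constructor
      · rw [hval, abs_of_nonneg (by omega)]
      · omega
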